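/- The collection {[φ] : φ ∈ L_B^Θ}, where [φ] := {(x,t) ∈ X × T : φ ∈ D(x,t)}, is an algebra of sets that generates the product σ-algebra Σ_{X×T}. -/

import Mathlib

open MeasureTheory ENNReal

/-- The language `L_B^Θ`: primitive propositions, negation, conjunction, and belief
operators `B_i^θ` for `θ ∈ Θ`. -/
inductive Formula (Φ I : Type*) (Θ : Set ℝ≥0∞) : Type _ where
  | prim : Φ → Formula Φ I Θ
  | neg : Formula Φ I Θ → Formula Φ I Θ
  | conj : Formula Φ I Θ → Formula Φ I Θ → Formula Φ I Θ
  | bel : I → Θ → Formula Φ I Θ → Formula Φ I Θ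

/-- Truth sets of formulas in a probability model `(Ω, (Pr_i), π)`. -/
def sem {Ω Φ I : Type*} {Θ : Set ℝ≥0∞} [MeasurableSpace Ω]
    (Pr : I → Ω → Measure Ω) (π : Φ → Set Ω) : Formula Φ I Θ → Set Ω
  | .prim p => π p
  | .neg φ => (sem Pr π φ)ᶜ
  | .conj φ ψ => sem Pr π φ ∩ sem Pr π ψ
  | .bel i θ φ => {ω | (θ : ℝ≥0∞) ≤ Pr i ω (sem Pr π φ)}

/-- A probability model: a measurable space of worlds, measurable introspective belief
functions `Pr_i : Ω → Δ(Ω)`, and an interpretation `π` of primitive propositions. -/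
structure ProbModel (Φ : Type) (n : ℕ) (Θ : Set ℝ≥0∞) where
  Ω : Type
  ms : MeasurableSpace Ω
  Pr : Fin n → Ω → @Measure Ω ms
  prob : ∀ i ω, IsProbabilityMeasure (Pr i ω)
  measPr : ∀ i (E : Set Ω) (θ : ℝ≥0∞), MeasurableSet[ms] E →
    MeasurableSet[ms] {ω | θ ≤ Pr i ω E}
  π : Φ → Set Ω
  measπ : ∀ p, MeasurableSet[ms] (π p)
  introspect : ∀ i ω,
    (⨅ (E : Set Ω) (_ : {ω' | Pr i ω' = Pr i ω} ⊆ E) (_ : MeasurableSet[ms] E), Pr i ω E) = 1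

/-- Truth sets in a (bundled) probability model. -/
def ProbModel.sem {Φ : Type} {n : ℕ} {Θ : Set ℝ≥0∞} (M : ProbModel Φ n Θ) :
    Formula Φ (Fin n) Θ → Set M.Ω :=
  @_root_.sem M.Ω Φ (Fin n) Θ M.ms M.Pr M.π

/-- Purely propositional formulas: Boolean combinations of primitive propositions. -/
inductive IsProp {Φ I : Type*} {Θ : Set ℝ≥0∞} : Formula Φ I Θ → Prop where
  | prim (p : Φ) : IsProp (.prim p)
  | neg {φ} : IsProp φ → IsProp (.neg φ)
  | conj {φ ψ} : IsProp φ → IsProp ψ → IsProp (.conj φ ψ)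

/-- `i`-formulas: Boolean combinations of formulas of the form `B_i^θ ψ`. -/
inductive IsIFormula {Φ I : Type*} {Θ : Set ℝ≥0∞} (i : I) : Formula Φ I Θ → Prop where
  | bel (θ : Θ) (φ : Formula Φ I Θ) : IsIFormula i (.bel i θ φ)
  | neg {φ} : IsIFormula i φ → IsIFormula i (.neg φ)
  | conj {φ ψ} : IsIFormula i φ → IsIFormula i ψ → IsIFormula i (.conj φ ψ)

/-- The `0`-description of a world: all purely propositional formulas true at it. -/
def d0 {Φ : Type} {n : ℕ} {Θ : Set ℝ≥0∞} (M : ProbModel Φ n Θ) (ω : M.Ω) :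
    Set (Formula Φ (Fin n) Θ) :=
  {φ | IsProp φ ∧ ω ∈ M.sem φ}

/-- The `i`-description of a world: all `i`-formulas true at it. -/
def di {Φ : Type} {n : ℕ} {Θ : Set ℝ≥0∞} (M : ProbModel Φ n Θ) (i : Fin n) (ω : M.Ω) :
    Set (Formula Φ (Fin n) Θ) :=
  {φ | IsIFormula i φ ∧ ω ∈ M.sem φ}

/-- `ω` satisfies every formula in `S`. -/
def SatAll {Φ : Type} {n : ℕ} {Θ : Set ℝ≥0∞} (M : ProbModel Φ n Θ) (ω : M.Ω)
    (S : Set (Formula Φ (Fin n) Θ)) : Prop :=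
  ∀ φ ∈ S, ω ∈ M.sem φ

/-- Semantic entailment: every world of every probability model satisfying all of `S`
satisfies `φ`. -/
def Entails {Φ : Type} {n : ℕ} {Θ : Set ℝ≥0∞} (S : Set (Formula Φ (Fin n) Θ))
    (φ : Formula Φ (Fin n) Θ) : Prop :=
  ∀ (M : ProbModel Φ n Θ) (ω : M.Ω), SatAll M ω S → ω ∈ M.sem φ

/-- A description: a satisfiable and maximal set of formulas. -/
def IsDescription {Φ : Type} {n : ℕ} {Θ : Set ℝ≥0∞} (D : Set (Formula Φ (Fin n) Θ)) : Prop :=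
  (∃ (M : ProbModel Φ n Θ) (ω : M.Ω), SatAll M ω D) ∧
    ∀ φ : Formula Φ (Fin n) Θ, φ ∈ D ∨ Formula.neg φ ∈ D

variable {Φ : Type} {n : ℕ} {Θ : Set ℝ≥0∞}

/-- The space `X` of 0-descriptions arising from worlds of `M`. -/
def Desc0 (M : ProbModel Φ n Θ) : Type :=
  {x : Set (Formula Φ (Fin n) Θ) // ∃ ω : M.Ω, x = d0 M ω}

/-- The space `T_i` of `i`-descriptions arising from worlds of `M`. -/
def DescI (M : ProbModel Φ n Θ) (i : Fin n) : Type :=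
  {t : Set (Formula Φ (Fin n) Θ) // ∃ ω : M.Ω, t = di M i ω}

/-- `E_0(φ) = {x : φ ∈ x}`. -/
def E0 (M : ProbModel Φ n Θ) (φ : Formula Φ (Fin n) Θ) : Set (Desc0 M) :=
  {x | φ ∈ x.1}

/-- `E_i(φ) = {t_i : φ ∈ t_i}`. -/
def Ei (M : ProbModel Φ n Θ) (i : Fin n) (φ : Formula Φ (Fin n) Θ) : Set (DescI M i) :=
  {t | φ ∈ t.1}

instance (M : ProbModel Φ n Θ) : MeasurableSpace (Desc0 M) :=
  MeasurableSpace.generateFrom {s | ∃ φ, s = E0 M φ}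

instance (M : ProbModel Φ n Θ) (i : Fin n) : MeasurableSpace (DescI M i) :=
  MeasurableSpace.generateFrom {s | ∃ φ, s = Ei M i φ}

/-- `[φ] = {(x,t) : φ ∈ D(x,t)}`, where `D(x,t)` is the unique description extending
`x ∪ ⋃_i t_i`; membership in `D(x,t)` is equivalently expressed by entailment. -/
def brack (M : ProbModel Φ n Θ) (φ : Formula Φ (Fin n) Θ) :
    Set (Desc0 M × ∀ i, DescI M i) :=
  {q | Entails (q.1.1 ∪ ⋃ i : Fin n, (q.2 i).1) φ}

/-! ### Auxiliary development -/

section Aux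

lemma sem_meas (M : ProbModel Φ n Θ) : ∀ φ, MeasurableSet[M.ms] (M.sem φ) := by
  letI := M.ms
  intro φ
  induction φ with
  | prim p => exact M.measπ p
  | neg φ ih => exact ih.compl
  | conj φ ψ ih1 ih2 => exact ih1.inter ih2
  | bel i θ φ ih => exact M.measPr i _ θ ih

/-- The diagonal map into the auxiliary product model. -/
def auxDelta (M : ProbModel Φ n Θ) : M.Ω → M.Ω × (Fin n → M.Ω) :=
  fun ω => (ω, fun _ => ω)

/-- Product measurable space on worlds of the auxiliary model. -/
def auxMS (M : ProbModel Φ n Θ) : MeasurableSpace (M.Ω × (Fin n → M.Ω)) :=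
  @Prod.instMeasurableSpace _ _ M.ms (@MeasurableSpace.pi _ _ fun _ => M.ms)

lemma auxDelta_measurable (M : ProbModel Φ n Θ) :
    @Measurable _ _ M.ms (auxMS M) (auxDelta M) := by
  letI := M.ms
  exact Measurable.prod measurable_id (measurable_pi_lambda _ fun _ => measurable_id)

/-- The auxiliary product model: propositional truth read off the first coordinate,
agent `i`'s beliefs read off coordinate `i`, pushed forward along the diagonal. -/
noncomputable def prodModel (M : ProbModel Φ n Θ) : ProbModel Φ n Θ where
  Ω := M.Ω × (Fin n → M.Ω)
  ms := auxMS M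
  Pr := fun i w => @Measure.map _ _ M.ms (auxMS M) (auxDelta M) (M.Pr i (w.2 i))
  prob := by
    letI := M.ms
    letI := auxMS M
    intro i w
    have := M.prob i (w.2 i)
    exact Measure.isProbabilityMeasure_map (auxDelta_measurable M).aemeasurable
  measPr := by
    letI := M.ms
    letI := auxMS M
    intro i E θ hE
    have hkey : ∀ w : M.Ω × (Fin n → M.Ω),
        (M.Pr i (w.2 i)).map (auxDelta M) E = M.Pr i (w.2 i) (auxDelta M ⁻¹' E) := by
      intro w
      exact Measure.map_apply (auxDelta_measurable M) hE
    have : {w : M.Ω × (Fin n → M.Ω) | θ ≤ (M.Pr i (w.2 i)).map (auxDelta M) E}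
        = (fun w : M.Ω × (Fin n → M.Ω) => w.2 i) ⁻¹'
          {ω | θ ≤ M.Pr i ω (auxDelta M ⁻¹' E)} := by
      ext w; simp [hkey w]
    rw [this]
    exact ((measurable_pi_apply i).comp measurable_snd)
      (M.measPr i _ θ (auxDelta_measurable M hE))
  π := fun p => Prod.fst ⁻¹' M.π p
  measπ := by
    letI := M.ms
    letI := auxMS M
    intro p
    exact measurable_fst (M.measπ p)
  introspect := by
    letI := M.ms
    letI := auxMS M
    intro i w
    set μ : Measure (M.Ω × (Fin n → M.Ω)) := (M.Pr i (w.2 i)).map (auxDelta M) with hμ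
    have hterm : ∀ E : Set (M.Ω × (Fin n → M.Ω)),
        {w' : M.Ω × (Fin n → M.Ω) |
            (M.Pr i (w'.2 i)).map (auxDelta M) = (M.Pr i (w.2 i)).map (auxDelta M)} ⊆ E →
        MeasurableSet E → (M.Pr i (w.2 i)).map (auxDelta M) E = 1 := by
      intro E hsub hE
      rw [Measure.map_apply (auxDelta_measurable M) hE]
      have hsub' : {ω' | M.Pr i ω' = M.Pr i (w.2 i)} ⊆ auxDelta M ⁻¹' E := by
        intro ω' hω'
        apply hsub
        show (M.Pr i ((auxDelta M ω').2 i)).map (auxDelta M) = _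
        simp only [auxDelta]
        rw [hω']
      have h1 : (1 : ℝ≥0∞) ≤ M.Pr i (w.2 i) (auxDelta M ⁻¹' E) := by
        rw [← M.introspect i (w.2 i)]
        exact le_trans
          (iInf_le_of_le (auxDelta M ⁻¹' E)
            (iInf_le_of_le hsub' (iInf_le_of_le (auxDelta_measurable M hE) le_rfl))) le_rfl
      have := M.prob i (w.2 i)
      exact le_antisymm prob_le_one h1
    apply le_antisymm
    · refine le_trans (iInf_le_of_le Set.univ ?_) le_rfl
      refine le_trans (iInf_le_of_le (Set.subset_univ _) ?_) le_rfl
      refine le_trans (iInf_le_of_le MeasurableSet.univ ?_) le_rfl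
      exact le_of_eq (hterm Set.univ (Set.subset_univ _) MeasurableSet.univ)
    · refine le_iInf fun E => le_iInf fun hsub => le_iInf fun hE => ?_
      exact le_of_eq (hterm E hsub hE).symm

lemma sem_prodModel_prop (M : ProbModel Φ n Θ) {φ : Formula Φ (Fin n) Θ}
    (h : IsProp φ) : ∀ w : M.Ω × (Fin n → M.Ω),
    (w ∈ (prodModel M).sem φ ↔ w.1 ∈ M.sem φ) := by
  induction h with
  | prim p => intro w; exact Iff.rfl
  | neg _ ih => intro w; exact not_congr (ih w)
  | conj _ _ ih1 ih2 => intro w; exact and_congr (ih1 w) (ih2 w)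

lemma sem_delta (M : ProbModel Φ n Θ) :
    ∀ (φ : Formula Φ (Fin n) Θ) (ω : M.Ω),
      (auxDelta M ω ∈ (prodModel M).sem φ ↔ ω ∈ M.sem φ) := by
  intro φ
  induction φ with
  | prim p => intro ω; exact Iff.rfl
  | neg φ ih => intro ω; exact not_congr (ih ω)
  | conj φ ψ ih1 ih2 => intro ω; exact and_congr (ih1 ω) (ih2 ω)
  | bel i θ φ ih =>
    intro ω
    letI := M.ms
    have hpre : auxDelta M ⁻¹' ((prodModel M).sem φ) = M.sem φ := by
      ext ω'; exact ih ω'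
    show (θ : ℝ≥0∞) ≤ (prodModel M).Pr i (auxDelta M ω) ((prodModel M).sem φ) ↔ _
    letI := auxMS M
    have hmap : (prodModel M).Pr i (auxDelta M ω) ((prodModel M).sem φ)
        = M.Pr i ω (M.sem φ) := by
      show ((M.Pr i ω).map (auxDelta M)) ((prodModel M).sem φ) = _
      rw [Measure.map_apply (auxDelta_measurable M) (sem_meas (prodModel M) φ), hpre]
    rw [hmap]
    exact Iff.rfl

lemma sem_prodModel_iform (M : ProbModel Φ n Θ) {i : Fin n} {φ : Formula Φ (Fin n) Θ}
    (h : IsIFormula i φ) : ∀ w : M.Ω × (Fin n → M.Ω),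
    (w ∈ (prodModel M).sem φ ↔ w.2 i ∈ M.sem φ) := by
  induction h with
  | bel θ ψ =>
    intro w
    letI := M.ms
    have hpre : auxDelta M ⁻¹' ((prodModel M).sem ψ) = M.sem ψ := by
      ext ω'; exact sem_delta M ψ ω'
    show (θ : ℝ≥0∞) ≤ (prodModel M).Pr i w ((prodModel M).sem ψ) ↔ _
    letI := auxMS M
    have hmap : (prodModel M).Pr i w ((prodModel M).sem ψ)
        = M.Pr i (w.2 i) (M.sem ψ) := by
      show ((M.Pr i (w.2 i)).map (auxDelta M)) ((prodModel M).sem ψ) = _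
      rw [Measure.map_apply (auxDelta_measurable M) (sem_meas (prodModel M) ψ), hpre]
    rw [hmap]
    exact Iff.rfl
  | neg _ ih => intro w; exact not_congr (ih w)
  | conj _ _ ih1 ih2 => intro w; exact and_congr (ih1 w) (ih2 w)

/-- The set of formulas attached to a pair `q = (x, t)`. -/
def SQ (M : ProbModel Φ n Θ) (q : Desc0 M × ∀ i, DescI M i) :
    Set (Formula Φ (Fin n) Θ) :=
  q.1.1 ∪ ⋃ i : Fin n, (q.2 i).1

lemma mem_brack (M : ProbModel Φ n Θ) (φ : Formula Φ (Fin n) Θ)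
    (q : Desc0 M × ∀ i, DescI M i) : q ∈ brack M φ ↔ Entails (SQ M q) φ := Iff.rfl

/-- Every mixed pair of descriptions is satisfiable, in the product model. -/
lemma witness (M : ProbModel Φ n Θ) (q : Desc0 M × ∀ i, DescI M i) :
    ∃ (ω₀ : M.Ω) (f : Fin n → M.Ω), q.1.1 = d0 M ω₀ ∧ (∀ i, (q.2 i).1 = di M i (f i)) ∧
      SatAll (prodModel M) (ω₀, f) (SQ M q) := by
  obtain ⟨ω₀, hx⟩ := q.1.2
  choose f hf using fun i => (q.2 i).2
  refine ⟨ω₀, f, hx, hf, ?_⟩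
  intro φ hφ
  rcases hφ with hφ | hφ
  · rw [hx] at hφ
    exact (sem_prodModel_prop M hφ.1 (ω₀, f)).2 hφ.2
  · obtain ⟨s, ⟨i, rfl⟩, hφ⟩ := hφ
    change φ ∈ (q.2 i).1 at hφ
    rw [hf i] at hφ
    exact (sem_prodModel_iform M hφ.1 (ω₀, f)).2 hφ.2

/-- Any two worlds (in any models) satisfying all of `SQ M q` agree on every formula. -/
lemma agree (M : ProbModel Φ n Θ) (q : Desc0 M × ∀ i, DescI M i)
    {M₁ M₂ : ProbModel Φ n Θ} {ω₁ : M₁.Ω} {ω₂ : M₂.Ω}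
    (h₁ : SatAll M₁ ω₁ (SQ M q)) (h₂ : SatAll M₂ ω₂ (SQ M q)) :
    ∀ φ, (ω₁ ∈ M₁.sem φ ↔ ω₂ ∈ M₂.sem φ) := by
  intro φ
  induction φ with
  | prim p =>
    obtain ⟨ωx, hx⟩ := q.1.2
    by_cases hω : ωx ∈ M.sem (.prim p)
    · have hmem : (Formula.prim p : Formula Φ (Fin n) Θ) ∈ SQ M q :=
        Or.inl (hx ▸ ⟨IsProp.prim p, hω⟩)
      exact iff_of_true (h₁ _ hmem) (h₂ _ hmem)
    · have hmem : (Formula.neg (.prim p) : Formula Φ (Fin n) Θ) ∈ SQ M q :=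
        Or.inl (hx ▸ ⟨IsProp.neg (IsProp.prim p), hω⟩)
      exact iff_of_false (h₁ _ hmem) (h₂ _ hmem)
  | neg φ ih => exact not_congr ih
  | conj φ ψ ih1 ih2 => exact and_congr ih1 ih2
  | bel i θ ψ =>
    obtain ⟨ωt, ht⟩ := (q.2 i).2
    by_cases hω : ωt ∈ M.sem (.bel i θ ψ)
    · have hmem : (Formula.bel i θ ψ : Formula Φ (Fin n) Θ) ∈ SQ M q :=
        Or.inr (Set.mem_iUnion.2 ⟨i, ht ▸ ⟨IsIFormula.bel θ ψ, hω⟩⟩)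
      exact iff_of_true (h₁ _ hmem) (h₂ _ hmem)
    · have hmem : (Formula.neg (.bel i θ ψ) : Formula Φ (Fin n) Θ) ∈ SQ M q :=
        Or.inr (Set.mem_iUnion.2 ⟨i, ht ▸ ⟨IsIFormula.neg (IsIFormula.bel θ ψ), hω⟩⟩)
      exact iff_of_false (h₁ _ hmem) (h₂ _ hmem)

lemma entails_iff (M : ProbModel Φ n Θ) (q : Desc0 M × ∀ i, DescI M i)
    {M₀ : ProbModel Φ n Θ} {ω₀ : M₀.Ω} (h₀ : SatAll M₀ ω₀ (SQ M q))
    (φ : Formula Φ (Fin n) Θ) : Entails (SQ M q) φ ↔ ω₀ ∈ M₀.sem φ := by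
  constructor
  · intro h; exact h M₀ ω₀ h₀
  · intro h M₁ ω₁ h₁
    exact (agree M q h₁ h₀ φ).2 h

lemma brack_neg (M : ProbModel Φ n Θ) (φ : Formula Φ (Fin n) Θ) :
    brack M (.neg φ) = (brack M φ)ᶜ := by
  ext q
  obtain ⟨ω₀, f, -, -, hsat⟩ := witness M q
  rw [Set.mem_compl_iff, mem_brack, mem_brack, entails_iff M q hsat,
    entails_iff M q hsat]
  exact Iff.rfl

lemma brack_conj (M : ProbModel Φ n Θ) (φ ψ : Formula Φ (Fin n) Θ) :
    brack M (.conj φ ψ) = brack M φ ∩ brack M ψ := by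
  ext q
  obtain ⟨ω₀, f, -, -, hsat⟩ := witness M q
  rw [Set.mem_inter_iff, mem_brack, mem_brack, mem_brack, entails_iff M q hsat,
    entails_iff M q hsat, entails_iff M q hsat]
  exact Iff.rfl

lemma mem_x_iff (M : ProbModel Φ n Θ) (q : Desc0 M × ∀ i, DescI M i)
    {φ : Formula Φ (Fin n) Θ} (h : IsProp φ) :
    φ ∈ q.1.1 ↔ Entails (SQ M q) φ := by
  obtain ⟨ω₀, f, hx, -, hsat⟩ := witness M q
  rw [entails_iff M q hsat]
  exact (Set.ext_iff.1 hx φ).trans ⟨fun h' => (sem_prodModel_prop M h (ω₀, f)).2 h'.2,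
    fun h' => ⟨h, (sem_prodModel_prop M h (ω₀, f)).1 h'⟩⟩

lemma mem_t_iff (M : ProbModel Φ n Θ) (q : Desc0 M × ∀ i, DescI M i) (i : Fin n)
    {φ : Formula Φ (Fin n) Θ} (h : IsIFormula i φ) :
    φ ∈ (q.2 i).1 ↔ Entails (SQ M q) φ := by
  obtain ⟨ω₀, f, -, ht, hsat⟩ := witness M q
  rw [entails_iff M q hsat]
  exact (Set.ext_iff.1 (ht i) φ).trans ⟨fun h' => (sem_prodModel_iform M h (ω₀, f)).2 h'.2,
    fun h' => ⟨h, (sem_prodModel_iform M h (ω₀, f)).1 h'⟩⟩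

lemma brack_prim (M : ProbModel Φ n Θ) (p : Φ) :
    brack M (.prim p) = Prod.fst ⁻¹' (E0 M (.prim p)) := by
  ext q
  rw [mem_brack, ← mem_x_iff M q (IsProp.prim p)]
  exact Iff.rfl

lemma brack_bel (M : ProbModel Φ n Θ) (i : Fin n) (θ : Θ) (ψ : Formula Φ (Fin n) Θ) :
    brack M (.bel i θ ψ) = (fun q : Desc0 M × ∀ j, DescI M j => q.2 i) ⁻¹'
      (Ei M i (.bel i θ ψ)) := by
  ext q
  rw [mem_brack, ← mem_t_iff M q i (IsIFormula.bel θ ψ)]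
  exact Iff.rfl

lemma brack_measurable (M : ProbModel Φ n Θ) (φ : Formula Φ (Fin n) Θ) :
    MeasurableSet (brack M φ) := by
  induction φ with
  | prim p =>
    rw [brack_prim]
    exact measurable_fst (MeasurableSpace.measurableSet_generateFrom ⟨_, rfl⟩)
  | neg φ ih => rw [brack_neg]; exact ih.compl
  | conj φ ψ ih1 ih2 => rw [brack_conj]; exact ih1.inter ih2
  | bel i θ ψ =>
    rw [brack_bel]
    exact ((measurable_pi_apply i).comp measurable_snd)
      (MeasurableSpace.measurableSet_generateFrom ⟨_, rfl⟩)

lemma fst_preimage_E0 (M : ProbModel Φ n Θ) (φ : Formula Φ (Fin n) Θ) :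
    MeasurableSet[MeasurableSpace.generateFrom
      {s | ∃ ψ : Formula Φ (Fin n) Θ, s = brack M ψ}]
      (Prod.fst ⁻¹' (E0 M φ) : Set (Desc0 M × ∀ i, DescI M i)) := by
  by_cases h : IsProp φ
  · have : (Prod.fst ⁻¹' (E0 M φ) : Set (Desc0 M × ∀ i, DescI M i)) = brack M φ := by
      ext q
      rw [mem_brack, ← mem_x_iff M q h]
      exact Iff.rfl
    rw [this]
    exact MeasurableSpace.measurableSet_generateFrom ⟨φ, rfl⟩
  · have : (E0 M φ : Set (Desc0 M)) = ∅ := by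
      ext x
      simp only [E0, Set.mem_setOf_eq, Set.mem_empty_iff_false, iff_false]
      intro hx
      obtain ⟨ω, hω⟩ := x.2
      rw [hω] at hx
      exact h hx.1
    rw [this]
    simp

lemma snd_preimage_Ei (M : ProbModel Φ n Θ) (i : Fin n) (φ : Formula Φ (Fin n) Θ) :
    MeasurableSet[MeasurableSpace.generateFrom
      {s | ∃ ψ : Formula Φ (Fin n) Θ, s = brack M ψ}]
      ((fun q : Desc0 M × ∀ j, DescI M j => q.2 i) ⁻¹' (Ei M i φ)) := by
  by_cases h : IsIFormula i φ
  · have : ((fun q : Desc0 M × ∀ j, DescI M j => q.2 i) ⁻¹' (Ei M i φ)) = brack M φ := by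
      ext q
      rw [mem_brack, ← mem_t_iff M q i h]
      exact Iff.rfl
    rw [this]
    exact MeasurableSpace.measurableSet_generateFrom ⟨φ, rfl⟩
  · have : (Ei M i φ : Set (DescI M i)) = ∅ := by
      ext t
      simp only [Ei, Set.mem_setOf_eq, Set.mem_empty_iff_false, iff_false]
      intro hx
      obtain ⟨ω, hω⟩ := t.2
      rw [hω] at hx
      exact h hx.1
    rw [this]
    simp

end Aux

/-- The collection `{[φ] : φ ∈ L_B^Θ}` is an algebra of sets generating the product
σ-algebra on `X × T`. -/
theorem stmt15 [Nonempty Φ] (M : ProbModel Φ n Θ) :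
    (Set.univ ∈ {s | ∃ φ : Formula Φ (Fin n) Θ, s = brack M φ}) ∧
    (∀ s ∈ {s | ∃ φ : Formula Φ (Fin n) Θ, s = brack M φ},
      sᶜ ∈ {s | ∃ φ : Formula Φ (Fin n) Θ, s = brack M φ}) ∧
    (∀ s t, s ∈ {s | ∃ φ : Formula Φ (Fin n) Θ, s = brack M φ} →
      t ∈ {s | ∃ φ : Formula Φ (Fin n) Θ, s = brack M φ} →
      s ∪ t ∈ {s | ∃ φ : Formula Φ (Fin n) Θ, s = brack M φ}) ∧
    MeasurableSpace.generateFrom {s | ∃ φ : Formula Φ (Fin n) Θ, s = brack M φ}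
      = (inferInstance : MeasurableSpace (Desc0 M × ∀ i, DescI M i)) := by
  refine ⟨?_, ?_, ?_, ?_⟩
  · obtain ⟨p⟩ := ‹Nonempty Φ›
    refine ⟨.neg (.conj (.prim p) (.neg (.prim p))), ?_⟩
    ext q
    simp only [Set.mem_univ, true_iff]
    intro M' ω _
    exact fun hmem => hmem.2 hmem.1
  · rintro s ⟨φ, rfl⟩
    exact ⟨.neg φ, (brack_neg M φ).symm⟩
  · rintro s t ⟨φ, rfl⟩ ⟨ψ, rfl⟩
    refine ⟨.neg (.conj (.neg φ) (.neg ψ)), ?_⟩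
    rw [brack_neg, brack_conj, brack_neg, brack_neg, Set.compl_inter, compl_compl,
      compl_compl]
  · refine le_antisymm (MeasurableSpace.generateFrom_le ?_) ?_
    · rintro s ⟨φ, rfl⟩
      exact brack_measurable M φ
    · set gb := MeasurableSpace.generateFrom
        {s | ∃ φ : Formula Φ (Fin n) Θ, s = brack M φ} with hgb
      have h1 : MeasurableSpace.comap Prod.fst
          (MeasurableSpace.generateFrom
            {s | ∃ φ : Formula Φ (Fin n) Θ, s = E0 M φ}) ≤ gb := by
        rw [MeasurableSpace.comap_le_iff_le_map]
        refine MeasurableSpace.generateFrom_le ?_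
        rintro s ⟨φ, rfl⟩
        exact fst_preimage_E0 M φ
      have h2 : ∀ i : Fin n,
          MeasurableSpace.comap (fun q : Desc0 M × ∀ j, DescI M j => q.2 i)
            (MeasurableSpace.generateFrom
              {s | ∃ φ : Formula Φ (Fin n) Θ, s = Ei M i φ}) ≤ gb := by
        intro i
        rw [MeasurableSpace.comap_le_iff_le_map]
        refine MeasurableSpace.generateFrom_le ?_
        rintro s ⟨φ, rfl⟩
        exact snd_preimage_Ei M i φ
      show (MeasurableSpace.generateFrom
            {s | ∃ φ : Formula Φ (Fin n) Θ, s = E0 M φ}).comap Prod.fst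
          ⊔ (⨆ i : Fin n, (MeasurableSpace.generateFrom
              {s | ∃ φ : Formula Φ (Fin n) Θ, s = Ei M i φ}).comap
              (fun t : ∀ j, DescI M j => t i)).comap Prod.snd ≤ gb
      refine sup_le h1 ?_
      rw [MeasurableSpace.comap_iSup]
      refine iSup_le fun i => ?_
      rw [MeasurableSpace.comap_comp]
      exact h2 i
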